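/- Consider the projected gradient method x_{k+1} = π_Q(x_k - h_k ∇f(x_k)) for minimizing a convex function f with L-Lipschitz gradient over a closed convex set Q ⊆ ℝⁿ, with step sizes h_k ∈ (0, 1/L]. Then for every k, ‖x_{k+1} - x*‖² ≤ ‖x_k - x*‖² - 2h_k(f(x_{k+1}) - f(x*)), where x* is a minimizer of f over Q. In particular, the distance to the minimizer is monotonically non-increasing. -/

import Mathlib

open RealInnerProductSpace

section aux
variable {E : Type*} [NormedAddCommGroup E] [InnerProductSpace ℝ E] [CompleteSpace E]

lemma line_hasDerivAt (f : E → ℝ) (g : E → E) (hg : ∀ x, HasGradientAt f (g x) x)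
    (x d : E) (t : ℝ) :
    HasDerivAt (fun s : ℝ => f (x + s • d)) ⟪g (x + t • d), d⟫ t := by
  have hc : HasDerivAt (fun s : ℝ => x + s • d) d t := by
    simpa using ((hasDerivAt_id t).smul_const d).const_add x
  have hF : HasFDerivAt f (InnerProductSpace.toDual ℝ E (g (x + t • d))) (x + t • d) :=
    hg (x + t • d)
  have := hF.comp_hasDerivAt t hc
  simp only [InnerProductSpace.toDual_apply_apply] at this
  exact this

lemma grad_convex_ineq (f : E → ℝ) (g : E → E) (hf : ConvexOn ℝ Set.univ f)
    (hg : ∀ x, HasGradientAt f (g x) x) (x y : E) :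
    f x + ⟪g x, y - x⟫ ≤ f y := by
  set d := y - x with hd
  have hφ : HasDerivAt (fun s : ℝ => f (x + s • d)) ⟪g x, d⟫ 0 := by
    simpa using line_hasDerivAt f g hg x d 0
  have htend : Filter.Tendsto (slope (fun s : ℝ => f (x + s • d)) 0)
      (nhdsWithin 0 (Set.Ioi 0)) (nhds ⟪g x, d⟫) :=
    (hasDerivAt_iff_tendsto_slope.mp hφ).mono_left
      (nhdsWithin_mono _ (fun t ht => ne_of_gt ht))
  have hbound : ∀ᶠ t in nhdsWithin (0:ℝ) (Set.Ioi 0),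
      slope (fun s : ℝ => f (x + s • d)) 0 t ≤ f y - f x := by
    filter_upwards [Ioo_mem_nhdsGT_of_mem (by norm_num : (0:ℝ) ∈ Set.Ico 0 1)] with t ht
    have ht0 : 0 < t := ht.1
    have ht1 : t < 1 := ht.2
    have hcvx : f (x + t • d) ≤ (1 - t) * f x + t * f y := by
      have := hf.2 (Set.mem_univ x) (Set.mem_univ y) (by linarith : (0:ℝ) ≤ 1 - t)
        (le_of_lt ht0) (by ring)
      have hpt : (1 - t) • x + t • y = x + t • d := by
        simp only [hd, smul_sub, sub_smul, one_smul]; abel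
      rw [hpt] at this
      simpa [smul_eq_mul] using this
    have : (f (x + t • d) - f (x + (0:ℝ) • d)) / t ≤ f y - f x := by
      rw [div_le_iff₀ ht0]
      simp only [zero_smul, add_zero]
      nlinarith
    simpa [slope_def_field, div_eq_inv_mul, mul_comm] using this
  exact le_of_sub_nonneg (by linarith [le_of_tendsto htend hbound])

lemma descent_lemma (f : E → ℝ) (g : E → E) (L : ℝ)
    (hg : ∀ x, HasGradientAt f (g x) x)
    (hLip : ∀ x y, ‖g x - g y‖ ≤ L * ‖x - y‖) (x y : E) :
    f y ≤ f x + ⟪g x, y - x⟫ + L / 2 * ‖y - x‖ ^ 2 := by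
  set d := y - x with hd
  set χ : ℝ → ℝ := fun t => f (x + t • d) - t * ⟪g x, d⟫ - L / 2 * ‖d‖ ^ 2 * t ^ 2 with hχ
  have hder : ∀ t : ℝ, HasDerivAt χ
      (⟪g (x + t • d), d⟫ - ⟪g x, d⟫ - L * ‖d‖ ^ 2 * t) t := by
    intro t
    have h1 := line_hasDerivAt f g hg x d t
    have h2 : HasDerivAt (fun t : ℝ => t * ⟪g x, d⟫) ⟪g x, d⟫ t := by
      simpa using (hasDerivAt_id t).mul_const ⟪g x, d⟫
    have h3 : HasDerivAt (fun t : ℝ => L / 2 * ‖d‖ ^ 2 * t ^ 2)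
        (L / 2 * ‖d‖ ^ 2 * (2 * t)) t := by
      simpa using (hasDerivAt_pow 2 t).const_mul (L / 2 * ‖d‖ ^ 2)
    have := (h1.sub h2).sub h3
    exact this.congr_deriv (by ring)
  have hmono : AntitoneOn χ (Set.Icc 0 1) := by
    apply antitoneOn_of_deriv_nonpos (convex_Icc 0 1)
    · exact fun t _ => (hder t).continuousAt.continuousWithinAt
    · intro t _
      exact ((hder t).differentiableAt).differentiableWithinAt
    · intro t ht
      rw [interior_Icc] at ht
      rw [(hder t).deriv]
      have hip : ⟪g (x + t • d) - g x, d⟫ ≤ L * ‖d‖ ^ 2 * t := by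
        calc ⟪g (x + t • d) - g x, d⟫ ≤ ‖g (x + t • d) - g x‖ * ‖d‖ :=
              real_inner_le_norm _ _
          _ ≤ (L * ‖x + t • d - x‖) * ‖d‖ := by
              apply mul_le_mul_of_nonneg_right (hLip _ _) (norm_nonneg _)
          _ = L * ‖d‖ ^ 2 * t := by
              simp [norm_smul, abs_of_pos ht.1]; ring
      rw [inner_sub_left] at hip
      linarith
  have := hmono (Set.left_mem_Icc.mpr zero_le_one) (Set.right_mem_Icc.mpr zero_le_one)
    zero_le_one
  simp only [hχ, zero_smul, add_zero, one_smul, zero_mul, mul_zero, sub_zero, one_pow,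
    mul_one] at this
  have hxy : x + d = y := by simp [hd]
  rw [hxy] at this
  linarith

end aux

theorem stmt_6 {n : ℕ} (f : EuclideanSpace ℝ (Fin n) → ℝ)
    (g : EuclideanSpace ℝ (Fin n) → EuclideanSpace ℝ (Fin n))
    (Q : Set (EuclideanSpace ℝ (Fin n)))
    (L : ℝ) (hL : 0 < L)
    (hf : ConvexOn ℝ Set.univ f)
    (hg : ∀ x, HasGradientAt f (g x) x)
    (hLip : ∀ x y, ‖g x - g y‖ ≤ L * ‖x - y‖)
    (hQc : IsClosed Q) (hQconv : Convex ℝ Q)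
    (x : ℕ → EuclideanSpace ℝ (Fin n)) (h : ℕ → ℝ)
    (hstep : ∀ k, 0 < h k ∧ h k ≤ 1 / L)
    (hxQ : ∀ k, x k ∈ Q)
    (hproj : ∀ k, ∀ y ∈ Q, ⟪x (k+1) - x k + h k • g (x k), y - x (k+1)⟫ ≥ 0)
    (xstar : EuclideanSpace ℝ (Fin n)) (hxstar : xstar ∈ Q)
    (hmin : ∀ y ∈ Q, f xstar ≤ f y) :
    ∀ k, ‖x (k+1) - xstar‖^2 ≤ ‖x k - xstar‖^2 - 2 * h k * (f (x (k+1)) - f xstar) := by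
  intro k
  set a := x k
  set b := x (k+1)
  set s := h k
  set p := xstar
  have hs0 : 0 < s := (hstep k).1
  have hsL : s * L ≤ 1 := by
    have := (hstep k).2
    calc s * L ≤ (1/L) * L := by nlinarith
      _ = 1 := by field_simp
  have hVI : ⟪b - a, p - b⟫ + s * ⟪g a, p - b⟫ ≥ 0 := by
    have := hproj k p hxstar
    rwa [inner_add_left, real_inner_smul_left] at this
  have h1 : ⟪g a, p - a⟫ ≤ f p - f a := by linarith [grad_convex_ineq f g hf hg a p]
  have h2 : f b ≤ f a + ⟪g a, b - a⟫ + L / 2 * ‖b - a‖ ^ 2 :=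
    descent_lemma f g L hg hLip a b
  have hsplit : ⟪g a, p - b⟫ = ⟪g a, p - a⟫ - ⟪g a, b - a⟫ := by
    rw [← inner_sub_right]; congr 1; abel
  have h3 : ⟪g a, p - b⟫ ≤ f p - f b + L / 2 * ‖b - a‖ ^ 2 := by
    rw [hsplit]; linarith
  have hid : ‖b - p‖ ^ 2 = ‖a - p‖ ^ 2 - ‖b - a‖ ^ 2 - 2 * ⟪b - a, p - b⟫ := by
    simp only [norm_sub_sq_real, inner_sub_left, inner_sub_right, real_inner_self_eq_norm_sq]
    linarith [real_inner_comm a b, real_inner_comm a p, real_inner_comm b p]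
  have hd2 : (0:ℝ) ≤ ‖b - a‖ ^ 2 := sq_nonneg _
  nlinarith [mul_le_mul_of_nonneg_left h3 (le_of_lt hs0)]
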